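/- Let a : ℤⁿ × 𝕋^{nr} → ℂ be such that T_a : ℓ^{p₁}(ℤⁿ)×⋯×ℓ^{p_r}(ℤⁿ) → ℓ^{p}(ℤⁿ) is a nuclear multilinear operator. Then the function x ↦ ‖ ∫_{𝕋^{nr}} a(x,ξ) e^{2πi(x̃-ℓ)·ξ} dξ ‖_{ℓ^{p₁'}(ℤⁿ_{ℓ₁})×⋯×ℓ^{p_r'}(ℤⁿ_{ℓ_r})} belongs to ℓ^p(ℤⁿ). -/

import Mathlib

open MeasureTheory Real
open scoped ENNReal NNReal

/-- The `ℓ^q`-norm (with `q ∈ [1,∞]`) of an `ℝ≥0∞`-valued sequence on `ℤⁿ`. -/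
noncomputable def elp (n : ℕ) (q : ℝ≥0∞) (F : (Fin n → ℤ) → ℝ≥0∞) : ℝ≥0∞ :=
  if q = ⊤ then ⨆ x, F x else (∑' x, F x ^ q.toReal) ^ (1 / q.toReal)

/-- The iterated mixed norm `‖⋯‖‖F(·,ℓ₂,…,ℓ_k)‖_{ℓ^{q₁}}‖_{ℓ^{q₂}}⋯‖_{ℓ^{q_k}}`. -/
noncomputable def mixedNorm (n : ℕ) :
    (k : ℕ) → (Fin k → ℝ≥0∞) → ((Fin k → Fin n → ℤ) → ℝ≥0∞) → ℝ≥0∞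
  | 0, _, F => F Fin.elim0
  | (k + 1), q, F => mixedNorm n k (fun i => q i.succ)
      (fun ℓ => elp n (q 0) fun z => F (Fin.cons z ℓ))

lemma aux_iSup_rpow {f : ℕ → ℝ≥0∞} (hf : Monotone f) {t : ℝ} (ht : 0 ≤ t) :
    (⨆ n, f n) ^ t = ⨆ n, f n ^ t := by
  have h1 : Filter.Tendsto (fun n => f n ^ t) Filter.atTop (nhds ((⨆ n, f n) ^ t)) :=
    (ENNReal.continuous_rpow_const.tendsto _).comp (tendsto_atTop_iSup hf)
  have h2 : Filter.Tendsto (fun n => f n ^ t) Filter.atTop (nhds (⨆ n, f n ^ t)) :=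
    tendsto_atTop_iSup (fun a b hab => ENNReal.rpow_le_rpow (hf hab) ht)
  exact tendsto_nhds_unique h1 h2

lemma aux_elp_mono (n : ℕ) (q : ℝ≥0∞) {F G : (Fin n → ℤ) → ℝ≥0∞} (h : ∀ x, F x ≤ G x) :
    elp n q F ≤ elp n q G := by
  unfold elp
  split
  · exact iSup_mono h
  · exact ENNReal.rpow_le_rpow
      (ENNReal.tsum_le_tsum fun x => ENNReal.rpow_le_rpow (h x) ENNReal.toReal_nonneg)
      (by positivity)

lemma aux_elp_const_mul (n : ℕ) {q : ℝ≥0∞} (hq : 1 ≤ q) (c : ℝ≥0∞)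
    (F : (Fin n → ℤ) → ℝ≥0∞) :
    elp n q (fun x => c * F x) = c * elp n q F := by
  unfold elp
  split
  · exact (ENNReal.mul_iSup _ _).symm
  · rename_i hqt
    have hq0 : q ≠ 0 := by intro h; simp [h] at hq
    have ht : 0 < q.toReal := ENNReal.toReal_pos hq0 hqt
    calc (∑' x, (c * F x) ^ q.toReal) ^ (1 / q.toReal)
        = (c ^ q.toReal * ∑' x, F x ^ q.toReal) ^ (1 / q.toReal) := by
          rw [← ENNReal.tsum_mul_left]
          exact congrArg (· ^ (1/q.toReal)) (tsum_congr fun x => ENNReal.mul_rpow_of_nonneg _ _ ht.le)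
      _ = (c ^ q.toReal) ^ (1 / q.toReal) * (∑' x, F x ^ q.toReal) ^ (1 / q.toReal) :=
          ENNReal.mul_rpow_of_nonneg _ _ (by positivity)
      _ = c * (∑' x, F x ^ q.toReal) ^ (1 / q.toReal) := by
          rw [← ENNReal.rpow_mul, mul_one_div_cancel ht.ne', ENNReal.rpow_one]

lemma aux_elp_tsum_le (n : ℕ) {q : ℝ≥0∞} (hq : 1 ≤ q) (F : ℕ → (Fin n → ℤ) → ℝ≥0∞) :
    elp n q (fun x => ∑' m, F m x) ≤ ∑' m, elp n q (F m) := by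
  by_cases hqt : q = ⊤
  · simp only [elp, hqt, if_pos rfl]
    exact iSup_le fun x => ENNReal.tsum_le_tsum fun m => le_iSup (fun x => F m x) x
  · simp only [elp, hqt, if_neg, ite_false]
    have hq0 : q ≠ 0 := by intro h; simp [h] at hq
    have ht : 0 < q.toReal := ENNReal.toReal_pos hq0 hqt
    have ht1 : 1 ≤ q.toReal := by
      have := ENNReal.toReal_mono hqt hq
      simpa using this
    have key : ∀ N : ℕ, (∑' x, (∑ m ∈ Finset.range N, F m x) ^ q.toReal) ^ (1 / q.toReal)
        ≤ ∑ m ∈ Finset.range N, (∑' x, F m x ^ q.toReal) ^ (1 / q.toReal) := by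
      intro N
      induction N with
      | zero =>
          simp only [Finset.range_zero, Finset.sum_empty]
          rw [ENNReal.zero_rpow_of_pos ht, tsum_zero,
            ENNReal.zero_rpow_of_pos (one_div_pos.mpr ht)]
      | succ N ihN =>
          simp only [Finset.sum_range_succ]
          have hmink := ENNReal.lintegral_Lp_add_le
            (μ := Measure.count) (f := fun x => ∑ m ∈ Finset.range N, F m x) (g := F N)
            (measurable_of_countable _).aemeasurable (measurable_of_countable _).aemeasurable ht1
          rw [lintegral_count, lintegral_count, lintegral_count] at hmink
          exact hmink.trans (add_le_add ihN le_rfl)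
    have hmono : ∀ x, Monotone fun N => ∑ m ∈ Finset.range N, F m x := fun x a b hab =>
      Finset.sum_le_sum_of_subset (Finset.range_subset_range.2 hab)
    calc (∑' x, (∑' m, F m x) ^ q.toReal) ^ (1 / q.toReal)
        = (∑' x, ⨆ N, (∑ m ∈ Finset.range N, F m x) ^ q.toReal) ^ (1 / q.toReal) := by
          congr 1; apply tsum_congr; intro x
          rw [ENNReal.tsum_eq_iSup_nat, aux_iSup_rpow (hmono x) ht.le]
      _ = (⨆ N, ∑' x, (∑ m ∈ Finset.range N, F m x) ^ q.toReal) ^ (1 / q.toReal) := by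
          rw [← lintegral_count, lintegral_iSup (fun N => measurable_of_countable _)
            (fun a b hab => fun x => ENNReal.rpow_le_rpow (hmono x hab) ht.le)]
          simp only [lintegral_count]
      _ = ⨆ N, (∑' x, (∑ m ∈ Finset.range N, F m x) ^ q.toReal) ^ (1 / q.toReal) := by
          refine aux_iSup_rpow (fun a b hab => ?_) (by positivity)
          exact ENNReal.tsum_le_tsum fun x => ENNReal.rpow_le_rpow (hmono x hab) ht.le
      _ ≤ ∑' m, (∑' x, F m x ^ q.toReal) ^ (1 / q.toReal) :=
          iSup_le fun N => (key N).trans (ENNReal.sum_le_tsum _)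

lemma aux_mixedNorm_mono (n : ℕ) : ∀ (k : ℕ) (q : Fin k → ℝ≥0∞)
    (F G : (Fin k → Fin n → ℤ) → ℝ≥0∞), (∀ ℓ, F ℓ ≤ G ℓ) →
    mixedNorm n k q F ≤ mixedNorm n k q G
  | 0, _, F, G, h => h _
  | (k + 1), q, F, G, h => by
      simp only [mixedNorm]
      exact aux_mixedNorm_mono n k _ _ _ fun ℓ => aux_elp_mono n (q 0) fun z => h _

lemma aux_mixedNorm_tsum_le (n : ℕ) : ∀ (k : ℕ) (q : Fin k → ℝ≥0∞), (∀ i, 1 ≤ q i) →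
    ∀ (F : ℕ → (Fin k → Fin n → ℤ) → ℝ≥0∞),
    mixedNorm n k q (fun ℓ => ∑' m, F m ℓ) ≤ ∑' m, mixedNorm n k q (F m)
  | 0, _, _, F => by simp only [mixedNorm]; exact le_rfl
  | (k + 1), q, hq, F => by
      simp only [mixedNorm]
      refine le_trans (aux_mixedNorm_mono n k _ _ _ fun ℓ =>
        aux_elp_tsum_le n (hq 0) (fun m z => F m (Fin.cons z ℓ))) ?_
      exact aux_mixedNorm_tsum_le n k _ (fun i => hq i.succ) _

lemma aux_mixedNorm_const_mul_prod (n : ℕ) : ∀ (k : ℕ) (q : Fin k → ℝ≥0∞), (∀ i, 1 ≤ q i) →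
    ∀ (c : ℝ≥0∞) (G : Fin k → (Fin n → ℤ) → ℝ≥0∞),
    mixedNorm n k q (fun ℓ => c * ∏ j, G j (ℓ j)) = c * ∏ j, elp n (q j) (G j)
  | 0, _, _, c, G => by simp [mixedNorm]
  | (k + 1), q, hq, c, G => by
      simp only [mixedNorm]
      have h1 : (fun ℓ : Fin k → Fin n → ℤ =>
          elp n (q 0) fun z => (fun ℓ' : Fin (k+1) → Fin n → ℤ => c * ∏ j, G j (ℓ' j)) (Fin.cons z ℓ))
          = fun ℓ => (c * elp n (q 0) (G 0)) * ∏ j : Fin k, G j.succ (ℓ j) := by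
        funext ℓ
        have h2 : (fun z => c * ∏ j, G j (Fin.cons z ℓ j))
            = fun z => (c * ∏ j : Fin k, G j.succ (ℓ j)) * G 0 z := by
          funext z
          rw [Fin.prod_univ_succ]
          simp only [Fin.cons_zero, Fin.cons_succ]
          ring
        rw [h2, aux_elp_const_mul n (hq 0)]
        ring
      rw [h1, aux_mixedNorm_const_mul_prod n k _ (fun i => hq i.succ)]
      rw [Fin.prod_univ_succ]
      ring

lemma aux_elp_eq_eLpNorm (n : ℕ) {q : ℝ≥0∞} (hq0 : q ≠ 0) (f : (Fin n → ℤ) → ℂ) :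
    elp n q (fun y => (‖f y‖₊ : ℝ≥0∞)) = eLpNorm f q Measure.count := by
  by_cases hqt : q = ⊤
  · simp [elp, hqt, eLpNorm_exponent_top, eLpNormEssSup_count]; rfl
  · rw [eLpNorm_eq_lintegral_rpow_enorm_toReal hq0 hqt, lintegral_count]
    simp [elp, hqt]; rfl

lemma aux_ennnorm_tsum_le (f : ℕ → ℂ) :
    (‖∑' k, f k‖₊ : ℝ≥0∞) ≤ ∑' k, (‖f k‖₊ : ℝ≥0∞) := by
  by_cases h : Summable fun k => ‖f k‖₊
  · rw [← ENNReal.coe_tsum h]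
    exact ENNReal.coe_le_coe.2 (nnnorm_tsum_le h)
  · have : (∑' k, (‖f k‖₊ : ℝ≥0∞)) = ⊤ := by
      by_contra h'
      exact h (ENNReal.tsum_coe_ne_top_iff_summable.1 h')
    rw [this]; exact le_top

/-- If `T_a` is nuclear then
`x ↦ ‖∫_{𝕋^{nr}} a(x,ξ)e^{2πi(x̃-ℓ)·ξ}dξ‖_{ℓ^{p₁'}×⋯×ℓ^{p_r'}}` belongs to `ℓ^p(ℤⁿ)`. -/
theorem statement10 (n r : ℕ) (hn : 1 ≤ n) (hr : 1 ≤ r)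
    (p : ℝ≥0∞) (pj qj : Fin r → ℝ≥0∞)
    (hp : 1 ≤ p ∧ p < ⊤) (hpj : ∀ j, 1 ≤ pj j ∧ pj j < ⊤)
    (hq : ∀ j, 1 / pj j + 1 / qj j = 1)
    (a : (Fin n → ℤ) → (Fin r → Fin n → ℝ) → ℂ)
    -- `T_a` is nuclear:
    (hnuc : ∃ (h : ℕ → (Fin n → ℤ) → ℂ) (g : ℕ → Fin r → (Fin n → ℤ) → ℂ),
        (∀ k, MemLp (h k) p Measure.count) ∧
        (∀ k j, MemLp (g k j) (qj j) Measure.count) ∧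
        (∑' k, eLpNorm (h k) p Measure.count *
            ∏ j, eLpNorm (g k j) (qj j) Measure.count ≠ ⊤) ∧
        ∀ f : Fin r → (Fin n → ℤ) → ℂ, (∀ j, MemLp (f j) (pj j) Measure.count) →
          ∀ x : Fin n → ℤ,
            (∫ η in Set.univ.pi fun _ : Fin r => Set.univ.pi fun _ : Fin n => Set.Ico (0:ℝ) 1,
                Complex.exp (2 * (π : ℂ) * Complex.I *
                  ((∑ j, ∑ i, (x i : ℝ) * η j i : ℝ) : ℂ)) * a x η *
                ∏ j, ∑' k : Fin n → ℤ,
                  Complex.exp (-2 * (π : ℂ) * Complex.I *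
                    ((∑ i, (k i : ℝ) * η j i : ℝ) : ℂ)) * f j k)
              = ∑' k, (∏ j, ∑' y : Fin n → ℤ, f j y * g k j y) * h k x) :
    elp n p (fun x : Fin n → ℤ =>
      mixedNorm n r qj (fun ℓ : Fin r → Fin n → ℤ =>
        (‖∫ ξ in Set.univ.pi fun _ : Fin r => Set.univ.pi fun _ : Fin n => Set.Ico (0:ℝ) 1,
            a x ξ * Complex.exp (2 * (π : ℂ) * Complex.I *
              ((∑ j, ∑ i, ((x i - ℓ j i : ℤ) : ℝ) * ξ j i : ℝ) : ℂ))‖₊ : ℝ≥0∞))) ≠ ⊤ := by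
  obtain ⟨h, g, memh, memg, hfin, hrep⟩ := hnuc
  have hp0 : p ≠ 0 := (lt_of_lt_of_le zero_lt_one hp.1).ne'
  have hpt : p ≠ ⊤ := hp.2.ne
  have hq1 : ∀ j, 1 ≤ qj j := by
    intro j
    have h1 : 1 / qj j ≤ 1 / pj j + 1 / qj j := le_add_self
    rw [hq j, one_div] at h1
    exact ENNReal.inv_le_one.1 h1
  have hq0 : ∀ j, qj j ≠ 0 := fun j => (lt_of_lt_of_le zero_lt_one (hq1 j)).ne'
  -- the key representation of the kernel
  have key : ∀ (x : Fin n → ℤ) (ℓ : Fin r → Fin n → ℤ),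
      (∫ ξ in Set.univ.pi fun _ : Fin r => Set.univ.pi fun _ : Fin n => Set.Ico (0:ℝ) 1,
          a x ξ * Complex.exp (2 * (π : ℂ) * Complex.I *
            ((∑ j, ∑ i, ((x i - ℓ j i : ℤ) : ℝ) * ξ j i : ℝ) : ℂ)))
        = ∑' k, (∏ j, g k j (ℓ j)) * h k x := by
    intro x ℓ
    have hδ : ∀ j, MemLp (fun y : Fin n → ℤ => if y = ℓ j then (1:ℂ) else 0)
        (pj j) Measure.count := by
      intro j
      have heq : (fun y : Fin n → ℤ => if y = ℓ j then (1:ℂ) else 0)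
          = Set.indicator {ℓ j} (fun _ => (1:ℂ)) := by
        funext y
        simp [Set.indicator_apply]
      refine ⟨(measurable_of_countable _).aestronglyMeasurable, ?_⟩
      rw [heq, eLpNorm_indicator_const (measurableSet_singleton _)
        (lt_of_lt_of_le zero_lt_one (hpj j).1).ne' (hpj j).2.ne]
      simp [Measure.count_singleton]
    have hrep' := hrep (fun j y => if y = ℓ j then (1:ℂ) else 0) hδ x
    calc (∫ ξ in Set.univ.pi fun _ : Fin r => Set.univ.pi fun _ : Fin n => Set.Ico (0:ℝ) 1,
          a x ξ * Complex.exp (2 * (π : ℂ) * Complex.I *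
            ((∑ j, ∑ i, ((x i - ℓ j i : ℤ) : ℝ) * ξ j i : ℝ) : ℂ)))
        = (∫ η in Set.univ.pi fun _ : Fin r => Set.univ.pi fun _ : Fin n => Set.Ico (0:ℝ) 1,
            Complex.exp (2 * (π : ℂ) * Complex.I *
              ((∑ j, ∑ i, (x i : ℝ) * η j i : ℝ) : ℂ)) * a x η *
            ∏ j, ∑' k : Fin n → ℤ,
              Complex.exp (-2 * (π : ℂ) * Complex.I *
                ((∑ i, (k i : ℝ) * η j i : ℝ) : ℂ)) * (if k = ℓ j then (1:ℂ) else 0)) := by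
          refine integral_congr_ae (Filter.Eventually.of_forall fun η => ?_)
          have hts : ∀ j, (∑' k : Fin n → ℤ,
              Complex.exp (-2 * (π : ℂ) * Complex.I *
                ((∑ i, (k i : ℝ) * η j i : ℝ) : ℂ)) * (if k = ℓ j then (1:ℂ) else 0))
              = Complex.exp (-2 * (π : ℂ) * Complex.I *
                ((∑ i, (ℓ j i : ℝ) * η j i : ℝ) : ℂ)) := by
            intro j
            rw [tsum_eq_single (ℓ j) (fun k hk => by simp [hk])]
            simp
          simp only [hts]
          rw [← Complex.exp_sum]
          have harg : (2 * (π : ℂ) * Complex.I *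
              ((∑ j, ∑ i, ((x i - ℓ j i : ℤ) : ℝ) * η j i : ℝ) : ℂ))
              = (2 * (π : ℂ) * Complex.I * ((∑ j, ∑ i, (x i : ℝ) * η j i : ℝ) : ℂ))
                + ∑ j, (-2 * (π : ℂ) * Complex.I *
                  ((∑ i, (ℓ j i : ℝ) * η j i : ℝ) : ℂ)) := by
            push_cast
            simp only [Finset.mul_sum]
            rw [← Finset.sum_add_distrib]
            refine Finset.sum_congr rfl fun j _ => ?_
            rw [← Finset.sum_add_distrib]
            refine Finset.sum_congr rfl fun i _ => ?_
            ring
          rw [harg, Complex.exp_add]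
          ring
      _ = ∑' k, (∏ j, ∑' y : Fin n → ℤ,
            (if y = ℓ j then (1:ℂ) else 0) * g k j y) * h k x := hrep'
      _ = ∑' k, (∏ j, g k j (ℓ j)) * h k x := by
          refine tsum_congr fun k => ?_
          congr 1
          refine Finset.prod_congr rfl fun j _ => ?_
          rw [tsum_eq_single (ℓ j) (fun y hy => by simp [hy])]
          simp
  set C : ℕ → ℝ≥0∞ := fun k => ∏ j, eLpNorm (g k j) (qj j) Measure.count with hC
  have hbound : ∀ x : Fin n → ℤ,
      mixedNorm n r qj (fun ℓ : Fin r → Fin n → ℤ =>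
        (‖∫ ξ in Set.univ.pi fun _ : Fin r => Set.univ.pi fun _ : Fin n => Set.Ico (0:ℝ) 1,
            a x ξ * Complex.exp (2 * (π : ℂ) * Complex.I *
              ((∑ j, ∑ i, ((x i - ℓ j i : ℤ) : ℝ) * ξ j i : ℝ) : ℂ))‖₊ : ℝ≥0∞))
      ≤ ∑' k, C k * (‖h k x‖₊ : ℝ≥0∞) := by
    intro x
    calc mixedNorm n r qj (fun ℓ : Fin r → Fin n → ℤ =>
        (‖∫ ξ in Set.univ.pi fun _ : Fin r => Set.univ.pi fun _ : Fin n => Set.Ico (0:ℝ) 1,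
            a x ξ * Complex.exp (2 * (π : ℂ) * Complex.I *
              ((∑ j, ∑ i, ((x i - ℓ j i : ℤ) : ℝ) * ξ j i : ℝ) : ℂ))‖₊ : ℝ≥0∞))
        ≤ mixedNorm n r qj (fun ℓ => ∑' k,
            (‖h k x‖₊ : ℝ≥0∞) * ∏ j, (‖g k j (ℓ j)‖₊ : ℝ≥0∞)) := by
          refine aux_mixedNorm_mono n r qj _ _ fun ℓ => ?_
          rw [key x ℓ]
          refine (aux_ennnorm_tsum_le _).trans (le_of_eq (tsum_congr fun k => ?_))
          rw [nnnorm_mul, nnnorm_prod, ENNReal.coe_mul, ENNReal.coe_finset_prod, mul_comm]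
      _ ≤ ∑' k, mixedNorm n r qj (fun ℓ =>
            (‖h k x‖₊ : ℝ≥0∞) * ∏ j, (‖g k j (ℓ j)‖₊ : ℝ≥0∞)) :=
          aux_mixedNorm_tsum_le n r qj hq1 _
      _ = ∑' k, C k * (‖h k x‖₊ : ℝ≥0∞) := by
          refine tsum_congr fun k => ?_
          refine (aux_mixedNorm_const_mul_prod n r qj hq1 _
            (fun j y => (‖g k j y‖₊ : ℝ≥0∞))).trans ?_
          rw [mul_comm]
          congr 1
          simp only [hC]
          exact Finset.prod_congr rfl fun j _ => aux_elp_eq_eLpNorm n (hq0 j) (g k j)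
  have hfin' : (∑' k, C k * eLpNorm (h k) p Measure.count) ≠ ⊤ := by
    refine ne_top_of_le_ne_top hfin (le_of_eq (tsum_congr fun k => ?_))
    rw [mul_comm]
  refine ne_top_of_le_ne_top hfin' ?_
  calc elp n p (fun x : Fin n → ℤ =>
      mixedNorm n r qj (fun ℓ : Fin r → Fin n → ℤ =>
        (‖∫ ξ in Set.univ.pi fun _ : Fin r => Set.univ.pi fun _ : Fin n => Set.Ico (0:ℝ) 1,
            a x ξ * Complex.exp (2 * (π : ℂ) * Complex.I *
              ((∑ j, ∑ i, ((x i - ℓ j i : ℤ) : ℝ) * ξ j i : ℝ) : ℂ))‖₊ : ℝ≥0∞)))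
      ≤ elp n p (fun x => ∑' k, C k * (‖h k x‖₊ : ℝ≥0∞)) :=
        aux_elp_mono n p hbound
    _ ≤ ∑' k, elp n p (fun x => C k * (‖h k x‖₊ : ℝ≥0∞)) :=
        aux_elp_tsum_le n hp.1 _
    _ = ∑' k, C k * eLpNorm (h k) p Measure.count := by
        refine tsum_congr fun k => ?_
        rw [aux_elp_const_mul n hp.1, aux_elp_eq_eLpNorm n hp0]
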